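/- Let ρ ≥ 2 and m ≥ 0, and let MULT_m := {(a,b,c) ∈ ℤ³ : 0 ≤ a < ρ^m, 0 ≤ b < ρ^m, and a·b = c}. Every DFA over the alphabet Σ³ representing MULT_m has at least ρ^m states. -/

import Mathlib

namespace Presburger

/-- A letter of the alphabet `Σ^r`, where `Σ = {0, …, ρ-1}`. -/
abbrev Letter (ρ r : ℕ) := Fin r → Fin ρ

/-- The natural number encoded by a word over `Σ` (most significant digit first). -/
def natVal (ρ : ℕ) (w : List ℕ) : ℕ := w.foldl (fun acc b => ρ * acc + b) 0

/-- The integer encoded by a nonempty word over `Σ` (ρ's complement,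
most significant digit first); the empty word gets the junk value `0`. -/
def intVal (ρ : ℕ) : List ℕ → ℤ
  | [] => 0
  | b :: u => (natVal ρ u : ℤ) - (if b = 0 then 0 else (ρ : ℤ) ^ u.length)

/-- The tuple of natural numbers encoded track-wise by a word over `Σ^r` (as integers). -/
def natVec (ρ r : ℕ) (w : List (Letter ρ r)) : Fin r → ℤ :=
  fun i => (natVal ρ (w.map fun b => (b i : ℕ)) : ℤ)

/-- The tuple of integers encoded track-wise by a nonempty word over `Σ^r`. -/
def intVec (ρ r : ℕ) (w : List (Letter ρ r)) : Fin r → ℤ :=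
  fun i => intVal ρ (w.map fun b => (b i : ℕ))

/-- A language over `Σ^r` represents a set `U ⊆ ℤ^r` if it consists exactly of the
nonempty words encoding a member of `U`. -/
def Represents (ρ r : ℕ) (L : Language (Letter ρ r)) (U : Set (Fin r → ℤ)) : Prop :=
  ∀ w : List (Letter ρ r), w ∈ L ↔ (w ≠ [] ∧ intVec ρ r w ∈ U)

/-- A DFA represents `U ⊆ ℤ^r` if its accepted language does. -/
def DFARepresents (ρ r : ℕ) {σ : Type*} (M : DFA (Letter ρ r) σ) (U : Set (Fin r → ℤ)) : Prop :=
  Represents ρ r M.accepts U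

/-- Value of the homogeneous term with coefficients `k` at the point `a`. -/
def tval {r : ℕ} (k : Fin r → ℤ) (a : Fin r → ℤ) : ℤ := ∑ i, k i * a i

/-- A homogeneous term is `0` or has all its coefficients nonzero. -/
def Homog {r : ℕ} (k : Fin r → ℤ) : Prop := k = 0 ∨ ∀ i, k i ≠ 0

/-- `σ(b)`: componentwise `0` if the digit is `0` and `-1` otherwise. -/
def sgnLetter {ρ r : ℕ} (b : Letter ρ r) : Fin r → ℤ :=
  fun i => if (b i : ℕ) = 0 then 0 else -1

/-- The letter `b` viewed as a tuple of integers. -/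
def letterInt {ρ r : ℕ} (b : Letter ρ r) : Fin r → ℤ := fun i => ((b i : ℕ) : ℤ)

/-- `‖t‖⁺`: the sum of the positive coefficients of `t`. -/
def posNorm {r : ℕ} (k : Fin r → ℤ) : ℤ := ∑ i, max (k i) 0

/-- `‖t‖⁻`: the sum of the absolute values of the negative coefficients of `t`. -/
def negNorm {r : ℕ} (k : Fin r → ℤ) : ℤ := ∑ i, max (-k i) 0

/-- `gcd(t)`: the gcd of the absolute values of the coefficients of `t`. -/
def gcdT {r : ℕ} (k : Fin r → ℤ) : ℕ := Finset.univ.gcd fun i => (k i).natAbs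

/-- The transition function `η` of the infinite-state automaton for `t`,
restricted to the integer states: `η(q, b) = ρ·q + t[b]`. -/
def etaStep (ρ : ℕ) {r : ℕ} (k : Fin r → ℤ) (q : ℤ) (b : Letter ρ r) : ℤ :=
  ρ * q + tval k (letterInt b)

/-- The transition of `η` out of the initial state: `η(q_I, b) = t[σ(b)]`. -/
def etaInit (ρ : ℕ) {r : ℕ} (k : Fin r → ℤ) (b : Letter ρ r) : ℤ :=
  tval k (sgnLetter b)

/-- A state `q` is small (for `t ⋈ c`) if `q < min{c, -‖t‖⁺}`. -/
def IsSmall {r : ℕ} (k : Fin r → ℤ) (c q : ℤ) : Prop := q < min c (-posNorm k)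

/-- A state `q` is large (for `t ⋈ c`) if `q > max{c, ‖t‖⁻}`. -/
def IsLarge {r : ℕ} (k : Fin r → ℤ) (c q : ℤ) : Prop := max c (negNorm k) < q

/-- The six relations `=, ≠, <, ≤, >, ≥` on `ℤ`. -/
def rel6 : Set (ℤ → ℤ → Prop) :=
  {fun x y => x = y, fun x y => x ≠ y, fun x y => x < y,
   fun x y => x ≤ y, fun x y => x > y, fun x y => x ≥ y}

/-- Clamp an integer into the state set `{m, …, n}`; yields `none` (the initial state)
only in the degenerate case `m > n`, which never occurs for small `m` and large `n`. -/
noncomputable def clampSt (m n x : ℤ) : Option ↥(Finset.Icc m n) :=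
  if h : max m (min n x) ∈ Finset.Icc m n then some ⟨max m (min n x), h⟩ else none

/-- The DFA `A^{t ⋈ c}_{(m,n)}` for the (in)equation `t ⋈ c`: states are
`q_I = none` together with `{m, …, n}`, transitions clamp `η` to `[m, n]`, and the
accepting states are the integer states `q` with `q ⋈ c`. -/
noncomputable def ineqDFA (ρ : ℕ) {r : ℕ} (k : Fin r → ℤ) (m n : ℤ) (rel : ℤ → ℤ → Prop) (c : ℤ) :
    DFA (Letter ρ r) (Option ↥(Finset.Icc m n)) where
  step q b :=
    match q with
    | none => clampSt m n (etaInit ρ k b)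
    | some z => clampSt m n (etaStep ρ k z.val b)
  start := none
  accept := {q | ∃ z : ↥(Finset.Icc m n), q = some z ∧ rel z.val c}

/-- Two states of a DFA are equivalent if they accept exactly the same words. -/
def stEquiv {α : Type*} {σ : Type*} (M : DFA α σ) (p q : σ) : Prop :=
  ∀ w : List α, (M.evalFrom p w ∈ M.accept ↔ M.evalFrom q w ∈ M.accept)

end Presburger

namespace Presburger

/-- j-th digit (MSD first) of `a` in an `m`-digit base-`ρ` representation. -/
def dg (ρ m a j : ℕ) : ℕ := a / ρ ^ (m - 1 - j) % ρ

lemma natVal_foldl (ρ : ℕ) (w : List ℕ) (acc : ℕ) :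
    w.foldl (fun acc b => ρ * acc + b) acc = acc * ρ ^ w.length + natVal ρ w := by
  induction w generalizing acc with
  | nil => simp [natVal]
  | cons b u ih =>
    simp only [List.foldl_cons, natVal, List.length_cons, Nat.mul_zero, Nat.zero_add] at *
    rw [ih (ρ * acc + b), ih b]
    ring

lemma natVal_cons (ρ b : ℕ) (u : List ℕ) :
    natVal ρ (b :: u) = b * ρ ^ u.length + natVal ρ u := by
  simp only [natVal, List.foldl_cons]
  have := natVal_foldl ρ u (ρ * 0 + b)
  simpa [natVal] using this

lemma natVal_append (ρ : ℕ) (u v : List ℕ) :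
    natVal ρ (u ++ v) = natVal ρ u * ρ ^ v.length + natVal ρ v := by
  simp only [natVal, List.foldl_append]
  exact natVal_foldl ρ v _

lemma natVal_dg (ρ m a : ℕ) :
    natVal ρ (List.ofFn fun j : Fin m => dg ρ m a (j : ℕ)) = a % ρ ^ m := by
  induction m with
  | zero => simp [natVal, Nat.mod_one]
  | succ m ih =>
    rw [List.ofFn_succ, natVal_cons]
    have hlen : (List.ofFn fun i : Fin m => dg ρ (m+1) a ((i.succ : Fin (m+1)) : ℕ)).length = m := by
      simp
    have heq : (List.ofFn fun i : Fin m => dg ρ (m+1) a ((i.succ : Fin (m+1)) : ℕ))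
        = List.ofFn fun j : Fin m => dg ρ m a (j : ℕ) := by
      congr 1
      funext i
      simp only [dg, Fin.val_succ]
      have h : m + 1 - 1 - ((i : ℕ) + 1) = m - 1 - (i : ℕ) := by omega
      rw [h]
    rw [hlen, heq, ih]
    have h0 : dg ρ (m+1) a ((0 : Fin (m+1)) : ℕ) = a / ρ ^ m % ρ := by
      simp [dg]
    rw [h0, Nat.mod_pow_succ]
    ring




/-- The word with `m` letters whose track `i` carries the `m`-digit representation of `v i`. -/
def mword (ρ : ℕ) (hρ : 0 < ρ) (m : ℕ) (v : Fin 3 → ℕ) : List (Letter ρ 3) :=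
  List.ofFn fun j : Fin m => fun i => ⟨dg ρ m (v i) (j : ℕ), Nat.mod_lt _ hρ⟩

/-- The all-zero letter. -/
def zl (ρ : ℕ) (hρ : 0 < ρ) : Letter ρ 3 := fun _ => ⟨0, hρ⟩

lemma mword_track (ρ : ℕ) (hρ : 0 < ρ) (m : ℕ) (v : Fin 3 → ℕ) (i : Fin 3) :
    (mword ρ hρ m v).map (fun b => (b i : ℕ))
      = List.ofFn fun j : Fin m => dg ρ m (v i) (j : ℕ) := by
  rw [mword, List.map_ofFn]
  rfl

lemma mword_length (ρ : ℕ) (hρ : 0 < ρ) (m : ℕ) (v : Fin 3 → ℕ) :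
    (mword ρ hρ m v).length = m := by simp [mword]

lemma intVec_val (ρ : ℕ) (hρ : 0 < ρ) (m : ℕ) (p s : Fin 3 → ℕ) (i : Fin 3) :
    intVec ρ 3 ((zl ρ hρ :: mword ρ hρ m p) ++ mword ρ hρ m s) i
      = ((p i % ρ ^ m : ℕ) : ℤ) * (ρ : ℤ) ^ m + ((s i % ρ ^ m : ℕ) : ℤ) := by
  unfold intVec
  rw [List.cons_append, List.map_cons, List.map_append, mword_track, mword_track]
  show intVal ρ (((zl ρ hρ) i : ℕ) :: _) = _
  have hz : ((zl ρ hρ) i : ℕ) = 0 := rfl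
  rw [hz, intVal, if_pos rfl, natVal_append, natVal_dg, natVal_dg]
  have : (List.ofFn fun j : Fin m => dg ρ m (s i) (j : ℕ)).length = m := by simp
  rw [this]
  push_cast
  ring




/-- Lemma `mbit_multiplication`.
Every DFA over the alphabet `Σ³` representing
`MULT_m = {(a,b,c) ∈ ℤ³ : 0 ≤ a < ρ^m, 0 ≤ b < ρ^m, a·b = c}` has at least
`ρ^m` states. -/
theorem stmt_17 (ρ : ℕ) (hρ : 2 ≤ ρ) (m : ℕ)
    (σ : Type*) [Fintype σ] (M : DFA (Letter ρ 3) σ)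
    (hM : DFARepresents ρ 3 M
      {a | 0 ≤ a 0 ∧ a 0 < (ρ : ℤ) ^ m ∧ 0 ≤ a 1 ∧ a 1 < (ρ : ℤ) ^ m ∧
           a 0 * a 1 = a 2}) :
    ρ ^ m ≤ Fintype.card σ := by
  have hρ0 : 0 < ρ := by omega
  have hP1 : 1 ≤ ρ ^ m := Nat.one_le_pow _ _ hρ0
  have hPZ : (1 : ℤ) ≤ (ρ : ℤ) ^ m := by exact_mod_cast hP1
  have accept_iff : ∀ c a : ℕ, c < ρ ^ m → a + 1 < ρ ^ m →
      ((zl ρ hρ0 :: mword ρ hρ0 m ![0, 0, c])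
        ++ mword ρ hρ0 m ![ρ ^ m - 1, a + 1, ρ ^ m - 1 - a] ∈ M.accepts ↔ c = a) := by
    intro c a hc ha
    rw [hM _]
    have hne : (zl ρ hρ0 :: mword ρ hρ0 m ![0, 0, c])
        ++ mword ρ hρ0 m ![ρ ^ m - 1, a + 1, ρ ^ m - 1 - a] ≠ [] := by simp
    simp only [hne, ne_eq, not_false_iff, true_and]
    have h0 := intVec_val ρ hρ0 m ![0,0,c] ![ρ ^ m - 1, a + 1, ρ ^ m - 1 - a] 0
    have h1 := intVec_val ρ hρ0 m ![0,0,c] ![ρ ^ m - 1, a + 1, ρ ^ m - 1 - a] 1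
    have h2 := intVec_val ρ hρ0 m ![0,0,c] ![ρ ^ m - 1, a + 1, ρ ^ m - 1 - a] 2
    simp only [Matrix.cons_val_zero, Matrix.cons_val_one, Matrix.head_cons,
      Matrix.cons_val_two, Matrix.tail_cons] at h0 h1 h2
    rw [Nat.zero_mod, Nat.mod_eq_of_lt (by omega : ρ ^ m - 1 < ρ ^ m)] at h0
    rw [Nat.zero_mod, Nat.mod_eq_of_lt ha] at h1
    rw [Nat.mod_eq_of_lt hc, Nat.mod_eq_of_lt (by omega : ρ ^ m - 1 - a < ρ ^ m)] at h2
    have c0 : ((ρ ^ m - 1 : ℕ) : ℤ) = (ρ : ℤ) ^ m - 1 := by push_cast [Nat.cast_sub hP1]; ring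
    have c1 : ((ρ ^ m - 1 - a : ℕ) : ℤ) = (ρ : ℤ) ^ m - 1 - a := by
      have : a ≤ ρ ^ m - 1 := by omega
      push_cast [Nat.cast_sub hP1, Nat.cast_sub this]
      ring
    rw [c0] at h0
    rw [c1] at h2
    push_cast at h0 h1 h2
    rw [Set.mem_setOf_eq, h0, h1, h2]
    have haZ : ((a : ℤ) + 1) < (ρ : ℤ) ^ m := by exact_mod_cast ha
    constructor
    · rintro ⟨-, -, -, -, hprod⟩
      have hexp : (0 * (ρ : ℤ) ^ m + ((ρ : ℤ) ^ m - 1)) * (0 * (ρ : ℤ) ^ m + ((a : ℤ) + 1))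
          = (a : ℤ) * (ρ : ℤ) ^ m + ((ρ : ℤ) ^ m - 1 - a) := by ring
      rw [hexp] at hprod
      have hcc : (a : ℤ) * (ρ : ℤ) ^ m = (c : ℤ) * (ρ : ℤ) ^ m := by linarith
      have := mul_right_cancel₀ (by linarith : ((ρ : ℤ) ^ m) ≠ 0) hcc
      exact_mod_cast this.symm
    · rintro rfl
      refine ⟨by linarith, by linarith, by positivity, by linarith, by ring⟩
  -- the fooling-set injection
  let f : Fin (ρ ^ m) → σ := fun x => M.eval (zl ρ hρ0 :: mword ρ hρ0 m ![0, 0, (x : ℕ)])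
  have key : ∀ u v : Fin (ρ ^ m), (u : ℕ) < (v : ℕ) → f u = f v → False := by
    intro u v huv hEq
    have hu1 : (u : ℕ) + 1 < ρ ^ m := by have := v.isLt; omega
    have hA := (accept_iff u u u.isLt hu1).mpr rfl
    have hB : ¬ ((zl ρ hρ0 :: mword ρ hρ0 m ![0, 0, (v : ℕ)])
        ++ mword ρ hρ0 m ![ρ ^ m - 1, (u : ℕ) + 1, ρ ^ m - 1 - u] ∈ M.accepts) := by
      intro h
      have := (accept_iff v u v.isLt hu1).mp h
      omega
    apply hB
    rw [DFA.mem_accepts] at hA ⊢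
    have e1 := M.evalFrom_of_append M.start (zl ρ hρ0 :: mword ρ hρ0 m ![0, 0, (v : ℕ)])
      (mword ρ hρ0 m ![ρ ^ m - 1, (u : ℕ) + 1, ρ ^ m - 1 - u])
    have e2 := M.evalFrom_of_append M.start (zl ρ hρ0 :: mword ρ hρ0 m ![0, 0, (u : ℕ)])
      (mword ρ hρ0 m ![ρ ^ m - 1, (u : ℕ) + 1, ρ ^ m - 1 - u])
    show M.evalFrom M.start _ ∈ M.accept
    rw [e1]
    have hEq' : M.evalFrom M.start (zl ρ hρ0 :: mword ρ hρ0 m ![0, 0, (u : ℕ)])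
        = M.evalFrom M.start (zl ρ hρ0 :: mword ρ hρ0 m ![0, 0, (v : ℕ)]) := hEq
    rw [← hEq', ← e2]
    exact hA
  have hinj : Function.Injective f := by
    intro x y hxy
    by_contra hne
    have hne' : (x : ℕ) ≠ (y : ℕ) := fun hh => hne (Fin.val_injective hh)
    rcases Nat.lt_or_ge (x : ℕ) (y : ℕ) with h | h
    · exact key x y h hxy
    · exact key y x (by omega) hxy.symm
  have := Fintype.card_le_of_injective f hinj
  simpa using this


end Presburger
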